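/- (Schrödinger estimate.) Let n ≥ 1 and let L be a symmetric n×n real matrix with L_{ij} ≤ 0 for all i ≠ j and with every row sum ∑_j L_{ij} ≥ 0 (this includes every matrix of the form K + diag(V), where K is the Kirchhoff matrix of a quiver and V is a nonnegative potential on the vertices). Then for every 1 ≤ k ≤ n, the k-th smallest eigenvalue of L satisfies λ_k ≤ d_k + d_{k−1}, where d_1 ≤ … ≤ d_n are the diagonal entries of L listed in increasing order and d_0 = 0. -/

import Mathlib

open Matrix

section SchroAux
open Finset


lemma schro_keyE {m : ℕ} (B : Matrix (Fin m) (Fin m) ℝ)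
    (hoff : ∀ a b, a ≠ b → B a b ≤ 0) (hrow : ∀ a, 0 ≤ ∑ b, B a b)
    {ν : ℝ} {w : Fin m → ℝ} (hw : w ≠ 0) (hvec : B *ᵥ w = ν • w) :
    (∃ a, ν = B a a) ∨ (∃ a b, a ≠ b ∧ ν ≤ B a a + B b b) := by
  have habs : ∀ a, ∑ b ∈ univ.erase a, |B a b| ≤ B a a := by
    intro a
    have h1 : ∑ b ∈ univ.erase a, |B a b| = -∑ b ∈ univ.erase a, B a b := by
      rw [← Finset.sum_neg_distrib]
      exact Finset.sum_congr rfl fun b hb =>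
        abs_of_nonpos (hoff a b (Finset.ne_of_mem_erase hb).symm)
    have h2 : B a a + ∑ b ∈ univ.erase a, B a b = ∑ b, B a b :=
      Finset.add_sum_erase _ _ (Finset.mem_univ a)
    have := hrow a
    linarith [h1, h2]
  have hdiag : ∀ a, 0 ≤ B a a := by
    intro a
    have := habs a
    have h0 : (0:ℝ) ≤ ∑ b ∈ univ.erase a, |B a b| :=
      Finset.sum_nonneg fun b _ => abs_nonneg _
    linarith
  have hne : Nonempty (Fin m) := by
    by_contra h
    exact hw (funext fun i => absurd ⟨i⟩ h)
  obtain ⟨a, -, ha⟩ := Finset.exists_max_image univ (fun i => |w i|) univ_nonempty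
  have hwa : w a ≠ 0 := by
    intro h0
    apply hw
    funext i
    have h1 : |w i| ≤ |w a| := ha i (mem_univ i)
    rw [h0, abs_zero] at h1
    exact abs_eq_zero.mp (le_antisymm h1 (abs_nonneg _))
  by_cases hz : ∀ b, b ≠ a → w b = 0
  · left
    refine ⟨a, ?_⟩
    have hrowa : ∑ j, B a j * w j = ν * w a := by
      have : (B *ᵥ w) a = (ν • w) a := by rw [hvec]
      simpa [Matrix.mulVec, dotProduct] using this
    rw [← Finset.add_sum_erase _ _ (Finset.mem_univ a)] at hrowa
    have hzero : ∑ j ∈ univ.erase a, B a j * w j = 0 :=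
      Finset.sum_eq_zero fun j hj => by
        rw [hz j (Finset.ne_of_mem_erase hj), mul_zero]
    rw [hzero, add_zero] at hrowa
    exact (mul_right_cancel₀ hwa hrowa).symm
  · right
    push_neg at hz
    obtain ⟨b', hb'ne, hb'⟩ := hz
    obtain ⟨b, hbmem, hb⟩ := Finset.exists_max_image (univ.erase a) (fun i => |w i|)
      ⟨b', Finset.mem_erase.mpr ⟨hb'ne, mem_univ _⟩⟩
    have hba : b ≠ a := Finset.ne_of_mem_erase hbmem
    refine ⟨a, b, hba.symm, ?_⟩
    have hwb : 0 < |w b| := lt_of_lt_of_le (abs_pos.mpr hb')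
      (hb b' (Finset.mem_erase.mpr ⟨hb'ne, mem_univ _⟩))
    have hwapos : 0 < |w a| := abs_pos.mpr hwa
    have key : ∀ (i : Fin m) (t : ℝ), (∀ j ∈ univ.erase i, |w j| ≤ t) → 0 ≤ t →
        (ν - B i i) * |w i| ≤ B i i * t := by
      intro i t ht ht0
      have hrowi : ∑ j, B i j * w j = ν * w i := by
        have : (B *ᵥ w) i = (ν • w) i := by rw [hvec]
        simpa [Matrix.mulVec, dotProduct] using this
      rw [← Finset.add_sum_erase _ _ (Finset.mem_univ i)] at hrowi
      have heq : ∑ j ∈ univ.erase i, B i j * w j = (ν - B i i) * w i := by linarith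
      calc (ν - B i i) * |w i| ≤ |(ν - B i i) * w i| := by
            rw [abs_mul]
            exact mul_le_mul_of_nonneg_right (le_abs_self _) (abs_nonneg _)
        _ = |∑ j ∈ univ.erase i, B i j * w j| := by rw [heq]
        _ ≤ ∑ j ∈ univ.erase i, |B i j * w j| := Finset.abs_sum_le_sum_abs _ _
        _ = ∑ j ∈ univ.erase i, |B i j| * |w j| :=
            Finset.sum_congr rfl fun j _ => abs_mul _ _
        _ ≤ ∑ j ∈ univ.erase i, |B i j| * t :=
            Finset.sum_le_sum fun j hj => mul_le_mul_of_nonneg_left (ht j hj) (abs_nonneg _)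
        _ = (∑ j ∈ univ.erase i, |B i j|) * t := (Finset.sum_mul _ _ _).symm
        _ ≤ B i i * t := mul_le_mul_of_nonneg_right (habs i) ht0
    have k1 : (ν - B a a) * |w a| ≤ B a a * |w b| :=
      key a |w b| (fun j hj => hb j hj) (abs_nonneg _)
    have k2 : (ν - B b b) * |w b| ≤ B b b * |w a| :=
      key b |w a| (fun j _ => ha j (mem_univ j)) (abs_nonneg _)
    by_contra hcon
    push_neg at hcon
    have hP : 0 < ν - B a a := by have := hdiag b; linarith
    have hQ : 0 < ν - B b b := by have := hdiag a; linarith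
    have hm : ((ν - B a a) * |w a|) * ((ν - B b b) * |w b|) ≤ (B a a * |w b|) * (B b b * |w a|) :=
      mul_le_mul k1 k2 (mul_nonneg hQ.le (abs_nonneg _)) (mul_nonneg (hdiag a) (abs_nonneg _))
    nlinarith [hdiag a, hdiag b, hwapos, hwb, mul_pos hwapos hwb]

lemma schro_dot_sum {m k : ℕ} (u : Fin m → ℝ) (f : Fin k → Fin m → ℝ) :
    u ⬝ᵥ (∑ i, f i) = ∑ i, u ⬝ᵥ f i := by
  simp only [dotProduct, Finset.sum_apply, Finset.mul_sum]
  rw [Finset.sum_comm]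

lemma schro_sum_dot {m k : ℕ} (u : Fin m → ℝ) (f : Fin k → Fin m → ℝ) :
    (∑ i, f i) ⬝ᵥ u = ∑ i, f i ⬝ᵥ u := by
  simp only [dotProduct, Finset.sum_apply, Finset.sum_mul]
  rw [Finset.sum_comm]

lemma schro_mulVec_sum {m k : ℕ} (M : Matrix (Fin m) (Fin m) ℝ) (f : Fin k → Fin m → ℝ) :
    M *ᵥ (∑ i, f i) = ∑ i, M *ᵥ f i := by
  funext j
  simp only [Matrix.mulVec, Finset.sum_apply]
  rw [← schro_dot_sum]

lemma schro_ortho_dot {m : ℕ} {M : Matrix (Fin m) (Fin m) ℝ} (hM : M.IsHermitian) (i j : Fin m) :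
    (fun l => hM.eigenvectorBasis i l) ⬝ᵥ (fun l => hM.eigenvectorBasis j l)
      = if i = j then 1 else 0 := by
  have h := orthonormal_iff_ite.mp hM.eigenvectorBasis.orthonormal i j
  simpa [PiLp.inner_apply, dotProduct, mul_comm] using h

lemma schro_decomp {m : ℕ} {M : Matrix (Fin m) (Fin m) ℝ} (hM : M.IsHermitian) (y : Fin m → ℝ) :
    ∃ c : Fin m → ℝ, y = ∑ i, c i • (fun l => hM.eigenvectorBasis i l) := by
  set v := hM.eigenvectorBasis
  set Y : EuclideanSpace ℝ (Fin m) := WithLp.toLp 2 y with hY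
  refine ⟨fun i => v.repr Y i, ?_⟩
  have h := v.sum_repr Y
  funext l
  have h2 := congrArg (fun z : EuclideanSpace ℝ (Fin m) => z l) h
  simp only at h2
  have h3 : (∑ i, v.repr Y i • v i) l = ∑ i, v.repr Y i * v i l := by
    rw [show ((∑ i, v.repr Y i • v i) l) = ∑ i, (v.repr Y i • v i) l from
      by rw [WithLp.ofLp_sum]; exact Finset.sum_apply l univ _]
    simp [PiLp.smul_apply]
  rw [Finset.sum_apply]
  show Y l = _
  rw [← h2, h3]
  simp

lemma schro_parseval {m : ℕ} {M : Matrix (Fin m) (Fin m) ℝ} (hM : M.IsHermitian)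
    (c : Fin m → ℝ) (y : Fin m → ℝ)
    (hy : y = ∑ i, c i • (fun l => hM.eigenvectorBasis i l)) :
    (∀ j, (fun l => hM.eigenvectorBasis j l) ⬝ᵥ y = c j) ∧
    y ⬝ᵥ y = ∑ i, c i ^ 2 ∧
    y ⬝ᵥ (M *ᵥ y) = ∑ i, hM.eigenvalues i * c i ^ 2 := by
  set u : Fin m → Fin m → ℝ := fun i => (fun l => hM.eigenvectorBasis i l) with hu
  have h3 : ∀ j, u j ⬝ᵥ y = c j := by
    intro j
    rw [hy, schro_dot_sum]
    simp only [dotProduct_smul, smul_eq_mul]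
    rw [Finset.sum_congr rfl (fun i _ => by rw [show u j ⬝ᵥ u i = if j = i then 1 else 0 from
      schro_ortho_dot hM j i])]
    simp
  refine ⟨h3, ?_, ?_⟩
  · rw [hy, schro_sum_dot]
    refine Finset.sum_congr rfl fun i _ => ?_
    rw [smul_dotProduct, ← hy, h3 i]
    simp [sq]
  · have hMy : M *ᵥ y = ∑ i, (c i * hM.eigenvalues i) • u i := by
      rw [hy, show (∑ i, c i • u i : Fin m → ℝ) = ∑ i, (c i • u i) from rfl, schro_mulVec_sum]
      refine Finset.sum_congr rfl fun i _ => ?_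
      rw [Matrix.mulVec_smul, show M *ᵥ u i = hM.eigenvalues i • u i from
        hM.mulVec_eigenvectorBasis i, smul_smul]
    rw [hMy, schro_dot_sum]
    refine Finset.sum_congr rfl fun i _ => ?_
    rw [dotProduct_smul]
    have h4 : y ⬝ᵥ u i = c i := by rw [dotProduct_comm, h3 i]
    rw [smul_eq_mul, h4]
    ring

lemma schro_qf_bound {m : ℕ} (B : Matrix (Fin m) (Fin m) ℝ) (hB : B.IsHermitian)
    (hoff : ∀ a b, a ≠ b → B a b ≤ 0) (hrow : ∀ a, 0 ≤ ∑ b, B a b)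
    (cst : ℝ) (h1 : ∀ a, B a a ≤ cst) (h2 : ∀ a b, a ≠ b → B a a + B b b ≤ cst)
    (y : Fin m → ℝ) : y ⬝ᵥ (B *ᵥ y) ≤ cst * (y ⬝ᵥ y) := by
  have heig : ∀ i, hB.eigenvalues i ≤ cst := by
    intro i
    have hw : (fun l => hB.eigenvectorBasis i l) ≠ (0 : Fin m → ℝ) := by
      intro h0
      have hz : hB.eigenvectorBasis i = (0 : EuclideanSpace ℝ (Fin m)) := by
        apply PiLp.ext
        intro l
        exact congrFun h0 l
      exact hB.eigenvectorBasis.orthonormal.ne_zero i hz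
    have hvec : B *ᵥ (fun l => hB.eigenvectorBasis i l)
        = hB.eigenvalues i • (fun l => hB.eigenvectorBasis i l) :=
      hB.mulVec_eigenvectorBasis i
    rcases schro_keyE B hoff hrow hw hvec with ⟨a, ha⟩ | ⟨a, b, hab, h⟩
    · exact ha ▸ h1 a
    · exact le_trans h (h2 a b hab)
  obtain ⟨c, hy⟩ := schro_decomp hB y
  obtain ⟨-, hyy, hyBy⟩ := schro_parseval hB c y hy
  rw [hyy, hyBy, Finset.mul_sum]
  exact Finset.sum_le_sum fun i _ =>
    mul_le_mul_of_nonneg_right (heig i) (sq_nonneg _)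

lemma schro_push {n k : ℕ} (ι : Fin k → Fin n) (c : Fin k → ℝ) (g : Fin n → ℝ) :
    (fun i => ∑ a, if i = ι a then c a else 0) ⬝ᵥ g = ∑ a, c a * g (ι a) := by
  simp only [dotProduct, Finset.sum_mul]
  rw [Finset.sum_comm]
  refine Finset.sum_congr rfl fun a _ => ?_
  simp [ite_mul]

end SchroAux

open Finset in
/-- **Schrödinger estimate.**
If `L` is a symmetric real `n × n` matrix (`n ≥ 1`) with nonpositive
off-diagonal entries and nonnegative row sums (which includes every
`K + diag V` with `K` the Kirchhoff matrix of a quiver and `V ≥ 0`), then the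
`k`-th smallest eigenvalue satisfies `λ_k ≤ d_k + d_{k-1}`, where
`d_1 ≤ ⋯ ≤ d_n` are the sorted diagonal entries of `L` and `d_0 = 0`. -/
theorem schroedinger_eigenvalue_upper_bound
    (n : ℕ) (hn : 1 ≤ n) (L : Matrix (Fin n) (Fin n) ℝ)
    (hsym : L.IsSymm)
    (hoff : ∀ i j : Fin n, i ≠ j → L i j ≤ 0)
    (hrow : ∀ i : Fin n, 0 ≤ ∑ j, L i j)
    (hL : L.IsHermitian)
    (lam : Fin n → ℝ)
    (hlam : lam = hL.eigenvalues ∘ Tuple.sort hL.eigenvalues)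
    (d : Fin n → ℝ)
    (hd : d = (fun i => L i i) ∘ Tuple.sort (fun i => L i i)) :
    ∀ (k : ℕ) (hk1 : 1 ≤ k) (hkn : k ≤ n),
      lam ⟨k - 1, by omega⟩ ≤
        d ⟨k - 1, by omega⟩ +
          (if h : 2 ≤ k then d ⟨k - 2, by omega⟩ else 0) := by
  intro k hk1 hkn
  have hklt : k - 1 < n := by omega
  set σ : Equiv.Perm (Fin n) := Tuple.sort hL.eigenvalues with hσ
  set τ : Equiv.Perm (Fin n) := Tuple.sort (fun i => L i i) with hτ
  have hlam_mono : Monotone lam := by rw [hlam]; exact Tuple.monotone_sort _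
  have hd_mono : Monotone d := by rw [hd]; exact Tuple.monotone_sort _
  have hdτ : ∀ j, d j = L (τ j) (τ j) := fun j => by rw [hd]; rfl
  have hlamσ : ∀ p, lam p = hL.eigenvalues (σ p) := fun p => by rw [hlam]; rfl
  -- diagonal entries of L are nonnegative
  have hLdiag : ∀ i, 0 ≤ L i i := by
    intro i
    have h2 : L i i + ∑ j ∈ univ.erase i, L i j = ∑ j, L i j :=
      Finset.add_sum_erase _ _ (Finset.mem_univ i)
    have h3 : ∑ j ∈ univ.erase i, L i j ≤ 0 :=
      Finset.sum_nonpos fun j hj => hoff i j (Finset.ne_of_mem_erase hj).symm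
    have := hrow i
    linarith
  have hd0 : ∀ j, 0 ≤ d j := fun j => (hdτ j) ▸ hLdiag (τ j)
  -- the embedding of the k smallest-diagonal indices
  set ι : Fin k → Fin n := fun a => τ (Fin.castLE hkn a) with hι
  have hιinj : Function.Injective ι :=
    fun a b h => Fin.castLE_injective hkn (τ.injective h)
  set B : Matrix (Fin k) (Fin k) ℝ := L.submatrix ι ι with hB
  have hBherm : B.IsHermitian := by
    have := hsym
    rw [Matrix.IsSymm] at this
    ext a b
    simp only [hB, Matrix.conjTranspose_apply, Matrix.submatrix_apply, star_trivial]
    exact congrFun (congrFun this (ι b)) (ι a) |>.symm ▸ rfl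
  have hBoff : ∀ a b, a ≠ b → B a b ≤ 0 :=
    fun a b h => hoff _ _ fun e => h (hιinj e)
  have hBrow : ∀ a, 0 ≤ ∑ b, B a b := by
    intro a
    have him : ∑ b, B a b = ∑ j ∈ Finset.image ι univ, L (ι a) j := by
      rw [Finset.sum_image (fun x _ y _ h => hιinj h)]
      rfl
    have hsd : ∑ j ∈ univ \ Finset.image ι univ, L (ι a) j
        + ∑ j ∈ Finset.image ι univ, L (ι a) j = ∑ j, L (ι a) j :=
      Finset.sum_sdiff (Finset.subset_univ _)
    have hneg : ∑ j ∈ univ \ Finset.image ι univ, L (ι a) j ≤ 0 := by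
      refine Finset.sum_nonpos fun j hj => ?_
      refine hoff _ _ fun e => ?_
      rw [Finset.mem_sdiff] at hj
      exact hj.2 (e ▸ Finset.mem_image_of_mem ι (mem_univ a))
    have := hrow (ι a)
    linarith
  set cst : ℝ := d ⟨k - 1, hklt⟩ + (if h : 2 ≤ k then d ⟨k - 2, by omega⟩ else 0) with hcst
  have hif0 : 0 ≤ (if h : 2 ≤ k then d ⟨k - 2, by omega⟩ else 0) := by
    split
    · exact hd0 _
    · exact le_refl 0
  have hBd : ∀ a : Fin k, B a a = d (Fin.castLE hkn a) := fun a => (hdτ _).symm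
  have h1 : ∀ a : Fin k, B a a ≤ cst := by
    intro a
    rw [hBd a]
    have : d (Fin.castLE hkn a) ≤ d ⟨k - 1, hklt⟩ :=
      hd_mono (by simp [Fin.le_def]; omega)
    linarith
  have h2 : ∀ a b : Fin k, a ≠ b → B a a + B b b ≤ cst := by
    intro a b hab
    have hk2 : 2 ≤ k := by
      have h1 := a.isLt
      have h2 := b.isLt
      have : a.val ≠ b.val := fun h => hab (Fin.ext h)
      omega
    rw [hcst, dif_pos hk2]
    have key : ∀ p q : Fin k, p.val < q.val → B p p + B q q ≤ d ⟨k - 1, hklt⟩ + d ⟨k - 2, by omega⟩ := by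
      intro p q hpq
      rw [hBd p, hBd q]
      have hp : d (Fin.castLE hkn p) ≤ d ⟨k - 2, by omega⟩ :=
        hd_mono (by simp [Fin.le_def]; omega)
      have hq : d (Fin.castLE hkn q) ≤ d ⟨k - 1, hklt⟩ :=
        hd_mono (by simp [Fin.le_def]; omega)
      linarith
    rcases Nat.lt_or_ge a.val b.val with h | h
    · exact key a b h
    · have : b.val < a.val := by
        have : a.val ≠ b.val := fun h => hab (Fin.ext h)
        omega
      have := key b a this
      linarith
  -- kernel vector
  set M : Matrix (Fin (k - 1)) (Fin k) ℝ :=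
    fun p a => hL.eigenvectorBasis (σ ⟨p.val, by omega⟩) (ι a) with hM
  have hker : ∃ c : Fin k → ℝ, c ≠ 0 ∧ M *ᵥ c = 0 := by
    have hni : ¬ Function.Injective M.mulVecLin := by
      intro hinj
      have h := LinearMap.finrank_le_finrank_of_injective hinj
      rw [Module.finrank_fin_fun, Module.finrank_fin_fun] at h
      omega
    rw [← LinearMap.ker_eq_bot] at hni
    obtain ⟨c, hcmem, hc0⟩ := Submodule.exists_mem_ne_zero_of_ne_bot hni
    exact ⟨c, hc0, by simpa [Matrix.mulVecLin_apply] using (LinearMap.mem_ker.mp hcmem)⟩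
  obtain ⟨c, hc0, hMc⟩ := hker
  set x : Fin n → ℝ := fun i => ∑ a, if i = ι a then c a else 0 with hx
  have hxg : ∀ g : Fin n → ℝ, x ⬝ᵥ g = ∑ a, c a * g (ι a) := fun g => schro_push ι c g
  have hxat : ∀ a₀, x (ι a₀) = c a₀ := by
    intro a₀
    rw [hx]
    simp only [hιinj.eq_iff]
    simp
  -- x ⬝ᵥ x
  have hxx : x ⬝ᵥ x = ∑ a, c a ^ 2 := by
    rw [hxg x]
    exact Finset.sum_congr rfl fun a _ => by rw [hxat a]; ring
  have hxxpos : 0 < x ⬝ᵥ x := by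
    rw [hxx]
    obtain ⟨a, ha⟩ := Function.ne_iff.mp hc0
    exact Finset.sum_pos' (fun i _ => sq_nonneg _)
      ⟨a, mem_univ a, lt_of_le_of_ne (sq_nonneg _) (Ne.symm (pow_ne_zero 2 ha))⟩
  -- x ⬝ᵥ L x = c ⬝ᵥ B c
  have hxLx : x ⬝ᵥ (L *ᵥ x) = c ⬝ᵥ (B *ᵥ c) := by
    rw [hxg]
    rw [dotProduct]
    refine Finset.sum_congr rfl fun a _ => ?_
    congr 1
    show (L *ᵥ x) (ι a) = (B *ᵥ c) a
    rw [show (L *ᵥ x) (ι a) = x ⬝ᵥ (fun j => L (ι a) j) by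
      rw [dotProduct_comm]; rfl]
    rw [hxg]
    simp [hB, Matrix.mulVec, dotProduct, mul_comm]
  -- orthogonality of x to the first k-1 sorted eigenvectors
  have horth : ∀ p : Fin n, p.val < k - 1 →
      (fun l => hL.eigenvectorBasis (σ p) l) ⬝ᵥ x = 0 := by
    intro p hp
    rw [dotProduct_comm, hxg]
    have := congrFun hMc ⟨p.val, hp⟩
    simpa [Matrix.mulVec, dotProduct, hM, mul_comm] using this
  -- decompose x in the eigenbasis of L
  obtain ⟨e, hxe⟩ := schro_decomp hL x
  obtain ⟨hrepr, hxx2, hxLx2⟩ := schro_parseval hL e x hxe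
  have hezero : ∀ p : Fin n, p.val < k - 1 → e (σ p) = 0 := by
    intro p hp
    rw [← hrepr (σ p)]
    exact horth p hp
  -- lower bound
  have hlow : lam ⟨k - 1, hklt⟩ * (x ⬝ᵥ x) ≤ x ⬝ᵥ (L *ᵥ x) := by
    rw [hxx2, hxLx2, Finset.mul_sum]
    rw [← Equiv.sum_comp σ (fun i => lam ⟨k - 1, hklt⟩ * e i ^ 2),
        ← Equiv.sum_comp σ (fun i => hL.eigenvalues i * e i ^ 2)]
    refine Finset.sum_le_sum fun p _ => ?_
    rcases Nat.lt_or_ge p.val (k - 1) with hp | hp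
    · rw [hezero p hp]
      simp
    · have : lam ⟨k - 1, hklt⟩ ≤ lam p := hlam_mono (by simp [Fin.le_def]; omega)
      rw [← hlamσ p]
      exact mul_le_mul_of_nonneg_right this (sq_nonneg _)
  -- upper bound
  have hup : x ⬝ᵥ (L *ᵥ x) ≤ cst * (x ⬝ᵥ x) := by
    rw [hxLx]
    have hq := schro_qf_bound B hBherm hBoff hBrow cst h1 h2 c
    have hcc : c ⬝ᵥ c = x ⬝ᵥ x := by
      rw [hxx]
      exact Finset.sum_congr rfl fun a _ => by ring
    rw [← hcc]
    exact hq
  have : lam ⟨k - 1, hklt⟩ * (x ⬝ᵥ x) ≤ cst * (x ⬝ᵥ x) := le_trans hlow hup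
  exact le_of_mul_le_mul_right this hxxpos
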